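/- Let N be an n×n real symmetric positive semidefinite matrix, Q a p×p real symmetric positive definite matrix, B an n×p real matrix, a, ℓ ∈ ℝⁿ and c ∈ ℝ. Then inf_{w ∈ ℝᵖ} [ ½ (a + B w)ᵀ N (a + B w) + ℓᵀ (a + B w) + c + ½ wᵀ Q w ] = ½ aᵀ h a + ℓ̃ᵀ a + c̃, where h := N − N B (Q + Bᵀ N B)⁻¹ Bᵀ N, ℓ̃ := ℓ − N B (Q + Bᵀ N B)⁻¹ Bᵀ ℓ, and c̃ := c − ½ ℓᵀ B (Q + Bᵀ N B)⁻¹ Bᵀ ℓ, and the infimum is attained. -/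

import Mathlib

open Matrix

noncomputable section

/-- `F(w) := ½ (a + B w)ᵀ N (a + B w) + ℓᵀ (a + B w) + c + ½ wᵀ Q w`. -/
def quadCost {n p : ℕ} (N : Matrix (Fin n) (Fin n) ℝ) (Q : Matrix (Fin p) (Fin p) ℝ)
    (B : Matrix (Fin n) (Fin p) ℝ) (a ell : Fin n → ℝ) (c : ℝ) (w : Fin p → ℝ) : ℝ :=
  (1 / 2) * ((a + B.mulVec w) ⬝ᵥ N.mulVec (a + B.mulVec w))
    + ell ⬝ᵥ (a + B.mulVec w) + c + (1 / 2) * (w ⬝ᵥ Q.mulVec w)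

private lemma dot_swap' {m k : ℕ} (M : Matrix (Fin m) (Fin k) ℝ) (x : Fin m → ℝ)
    (y : Fin k → ℝ) : x ⬝ᵥ M.mulVec y = Mᵀ.mulVec x ⬝ᵥ y := by
  rw [Matrix.dotProduct_mulVec, Matrix.mulVec_transpose]

/-- With `N` symmetric positive semidefinite and `Q` symmetric positive definite,
`inf_w F(w) = ½ aᵀ h a + ℓ̃ᵀ a + c̃` with
`h = N − N B (Q + Bᵀ N B)⁻¹ Bᵀ N`, `ℓ̃ = ℓ − N B (Q + Bᵀ N B)⁻¹ Bᵀ ℓ`,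
`c̃ = c − ½ ℓᵀ B (Q + Bᵀ N B)⁻¹ Bᵀ ℓ`, and the infimum is attained. -/
theorem quadCost_inf_formula {n p : ℕ}
    (N : Matrix (Fin n) (Fin n) ℝ) (hN : N.PosSemidef)
    (Q : Matrix (Fin p) (Fin p) ℝ) (hQ : Q.PosDef)
    (B : Matrix (Fin n) (Fin p) ℝ) (a ell : Fin n → ℝ) (c : ℝ) :
    sInf (Set.range (quadCost N Q B a ell c)) =
      (1 / 2) * (a ⬝ᵥ (N - N * B * (Q + Bᵀ * N * B)⁻¹ * Bᵀ * N).mulVec a)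
        + (ell - (N * B * (Q + Bᵀ * N * B)⁻¹ * Bᵀ).mulVec ell) ⬝ᵥ a
        + (c - (1 / 2) * (ell ⬝ᵥ (B * (Q + Bᵀ * N * B)⁻¹ * Bᵀ).mulVec ell)) ∧
    ∃ w : Fin p → ℝ,
      quadCost N Q B a ell c w = sInf (Set.range (quadCost N Q B a ell c)) := by
  classical
  set S := Q + Bᵀ * N * B with hSdef
  have hNsym : Nᵀ = N := by
    simpa [Matrix.conjTranspose_eq_transpose_of_trivial] using hN.isHermitian.eq
  have hBNB : (Bᵀ * N * B).PosSemidef := by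
    simpa [Matrix.conjTranspose_eq_transpose_of_trivial] using
      hN.conjTranspose_mul_mul_same B
  have hS : S.PosDef := hQ.add_posSemidef hBNB
  have hSsym : Sᵀ = S := by
    simpa [Matrix.conjTranspose_eq_transpose_of_trivial] using hS.isHermitian.eq
  have hSinv1 : S * S⁻¹ = 1 := Matrix.mul_nonsing_inv _ (isUnit_iff_ne_zero.mpr hS.det_pos.ne')
  have hSinvT : (S⁻¹)ᵀ = S⁻¹ := by
    rw [Matrix.transpose_nonsing_inv, hSsym]
  -- abbreviations
  set g : Fin p → ℝ := Bᵀ.mulVec (N.mulVec a + ell) with hg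
  set K : ℝ := (1 / 2) * (a ⬝ᵥ N.mulVec a) + ell ⬝ᵥ a + c with hK
  set T : ℝ := K - (1 / 2) * (g ⬝ᵥ S⁻¹.mulVec g) with hT
  set u : Fin p → ℝ := S⁻¹.mulVec g with hu
  have hSu : S.mulVec u = g := by
    rw [hu, Matrix.mulVec_mulVec, hSinv1, Matrix.one_mulVec]
  -- generic swap facts
  have swapN : ∀ x y : Fin n → ℝ, x ⬝ᵥ N.mulVec y = y ⬝ᵥ N.mulVec x := by
    intro x y; rw [dot_swap', hNsym, dotProduct_comm]
  have swapS : ∀ x y : Fin p → ℝ, x ⬝ᵥ S.mulVec y = y ⬝ᵥ S.mulVec x := by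
    intro x y; rw [dot_swap', hSsym, dotProduct_comm]
  -- Step A : quadCost w = ½ w⬝Sw + g⬝w + K
  have stepA : ∀ w, quadCost N Q B a ell c w
      = (1 / 2) * (w ⬝ᵥ S.mulVec w) + g ⬝ᵥ w + K := by
    intro w
    have h1 : w ⬝ᵥ S.mulVec w
        = w ⬝ᵥ Q.mulVec w + (B.mulVec w) ⬝ᵥ N.mulVec (B.mulVec w) := by
      rw [hSdef, Matrix.add_mulVec, dotProduct_add]
      congr 1
      rw [← Matrix.mulVec_mulVec, ← Matrix.mulVec_mulVec, dot_swap',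
        Matrix.transpose_transpose]
    have h2 : g ⬝ᵥ w = a ⬝ᵥ N.mulVec (B.mulVec w) + ell ⬝ᵥ B.mulVec w := by
      rw [hg, ← dot_swap', add_dotProduct]
      congr 1
      rw [dotProduct_comm]
      exact swapN _ _
    simp only [quadCost, Matrix.mulVec_add, dotProduct_add,
      add_dotProduct, h1, h2]
    have h3 : B.mulVec w ⬝ᵥ N.mulVec a = a ⬝ᵥ N.mulVec (B.mulVec w) := swapN _ _
    rw [h3, hK]; ring
  -- Step B : the RHS of the theorem equals T
  have e1 : a ⬝ᵥ (N * B * S⁻¹ * Bᵀ * N).mulVec a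
      = (Bᵀ.mulVec (N.mulVec a)) ⬝ᵥ S⁻¹.mulVec (Bᵀ.mulVec (N.mulVec a)) := by
    rw [show N * B * S⁻¹ * Bᵀ * N = N * (B * (S⁻¹ * (Bᵀ * N))) by simp only [Matrix.mul_assoc],
      ← Matrix.mulVec_mulVec, ← Matrix.mulVec_mulVec, ← Matrix.mulVec_mulVec,
      ← Matrix.mulVec_mulVec, dot_swap', hNsym, dot_swap' B]
  have e2 : ((N * B * S⁻¹ * Bᵀ).mulVec ell) ⬝ᵥ a
      = (Bᵀ.mulVec (N.mulVec a)) ⬝ᵥ S⁻¹.mulVec (Bᵀ.mulVec ell) := by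
    rw [dotProduct_comm,
      show N * B * S⁻¹ * Bᵀ = N * (B * (S⁻¹ * Bᵀ)) by simp only [Matrix.mul_assoc],
      ← Matrix.mulVec_mulVec, ← Matrix.mulVec_mulVec, ← Matrix.mulVec_mulVec,
      dot_swap', hNsym, dot_swap' B]
  have e2' : (Bᵀ.mulVec ell) ⬝ᵥ S⁻¹.mulVec (Bᵀ.mulVec (N.mulVec a))
      = (Bᵀ.mulVec (N.mulVec a)) ⬝ᵥ S⁻¹.mulVec (Bᵀ.mulVec ell) := by
    rw [dot_swap', hSinvT, dotProduct_comm]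
  have e3 : ell ⬝ᵥ (B * S⁻¹ * Bᵀ).mulVec ell
      = (Bᵀ.mulVec ell) ⬝ᵥ S⁻¹.mulVec (Bᵀ.mulVec ell) := by
    rw [show B * S⁻¹ * Bᵀ = B * (S⁻¹ * Bᵀ) by simp only [Matrix.mul_assoc], ← Matrix.mulVec_mulVec,
      ← Matrix.mulVec_mulVec, dot_swap' B]
  have hgexp : g ⬝ᵥ S⁻¹.mulVec g
      = (Bᵀ.mulVec (N.mulVec a)) ⬝ᵥ S⁻¹.mulVec (Bᵀ.mulVec (N.mulVec a))
        + 2 * ((Bᵀ.mulVec (N.mulVec a)) ⬝ᵥ S⁻¹.mulVec (Bᵀ.mulVec ell))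
        + (Bᵀ.mulVec ell) ⬝ᵥ S⁻¹.mulVec (Bᵀ.mulVec ell) := by
    rw [hg, Matrix.mulVec_add, Matrix.mulVec_add, dotProduct_add,
      add_dotProduct, add_dotProduct, e2']
    ring
  have stepB : (1 / 2) * (a ⬝ᵥ (N - N * B * S⁻¹ * Bᵀ * N).mulVec a)
        + (ell - (N * B * S⁻¹ * Bᵀ).mulVec ell) ⬝ᵥ a
        + (c - (1 / 2) * (ell ⬝ᵥ (B * S⁻¹ * Bᵀ).mulVec ell)) = T := by
    rw [Matrix.sub_mulVec, dotProduct_sub, sub_dotProduct,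
      e1, e2, e3, hT, hK, hgexp]
    ring
  -- Step C : quadCost w = ½ (w+u)⬝S(w+u) + T
  have stepC : ∀ w, quadCost N Q B a ell c w
      = (1 / 2) * ((w + u) ⬝ᵥ S.mulVec (w + u)) + T := by
    intro w
    have h4 : (w + u) ⬝ᵥ S.mulVec (w + u)
        = w ⬝ᵥ S.mulVec w + 2 * (g ⬝ᵥ w) + g ⬝ᵥ S⁻¹.mulVec g := by
      rw [Matrix.mulVec_add, dotProduct_add, add_dotProduct,
        add_dotProduct, hSu, swapS u w, hSu]
      rw [show u ⬝ᵥ g = g ⬝ᵥ S⁻¹.mulVec g from by rw [hu, dotProduct_comm],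
        dotProduct_comm w g]
      ring
    rw [stepA w, h4, hT]; ring
  -- lower bound and attainment
  have hlb : ∀ w, T ≤ quadCost N Q B a ell c w := by
    intro w
    rw [stepC w]
    have := hS.posSemidef.dotProduct_mulVec_nonneg (w + u)
    have h0 : (0:ℝ) ≤ (w + u) ⬝ᵥ S.mulVec (w + u) := by simpa using this
    linarith
  have hatt : quadCost N Q B a ell c (-u) = T := by
    rw [stepC (-u)]
    simp
  have hmem : T ∈ Set.range (quadCost N Q B a ell c) := ⟨-u, hatt⟩
  have hbdd : BddBelow (Set.range (quadCost N Q B a ell c)) := by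
    refine ⟨T, ?_⟩
    rintro x ⟨w, rfl⟩
    exact hlb w
  have hsinf : sInf (Set.range (quadCost N Q B a ell c)) = T := by
    refine le_antisymm (csInf_le hbdd hmem) (le_csInf ⟨_, hmem⟩ ?_)
    rintro x ⟨w, rfl⟩
    exact hlb w
  exact ⟨by rw [hsinf, ← stepB], ⟨-u, by rw [hatt, hsinf]⟩⟩

end
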